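/- arXiv:1710.10875 — 2 statements merged into one kernel-verified Lean document; each statement's English description precedes it below -/
import Mathlib

section
/- There is an absolute constant C > 0 such that for every integer N ≥ 1 and every real x ≥ 1, #{n ≤ x : B(n) − β(n) ≥ N} ≤ C·x/N; that is, the bound #{n ≤ x : B(n) − β(n) ≥ N} ≪ x/N holds uniformly in N > 0. -/
/-- `B n` is the sum of the prime divisors of `n` counted with multiplicity
(so `B 1 = 0`). -/
def B (n : ℕ) : ℕ := (Nat.primeFactorsList n).sum
/-- `beta n` is the sum of the distinct prime divisors of `n` (so `beta 1 = 0`). -/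
def beta (n : ℕ) : ℕ := ∑ p ∈ n.primeFactors, p

lemma B_eq (n : ℕ) : B n = ∑ p ∈ n.primeFactors, n.factorization p * p := by
  unfold B
  rw [← Multiset.sum_coe]
  have := Multiset.toFinset_sum_count_nsmul_eq (↑n.primeFactorsList : Multiset ℕ)
  conv_lhs => rw [← this]
  rw [Multiset.sum_sum]
  apply Finset.sum_congr rfl
  intro p _
  rw [Multiset.coe_count, Nat.primeFactorsList_count_eq, Multiset.sum_nsmul,
    Multiset.sum_singleton, smul_eq_mul]

def Sf (n : ℕ) : Finset ℕ := n.primeFactors.filter (fun p => 2 ≤ n.factorization p)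

def Pf (n : ℕ) : ℕ := ∏ p ∈ Sf n, p ^ n.factorization p

def bf (n : ℕ) : ℕ := ∏ p ∈ Sf n,
  p ^ (if n.factorization p % 2 = 0 then n.factorization p / 2 else (n.factorization p - 3) / 2)

def cf (n : ℕ) : ℕ := ∏ p ∈ (Sf n).filter (fun p => n.factorization p % 2 = 1), p

lemma f_eq (n : ℕ) (hn : n ≠ 0) :
    B n - beta n = ∑ p ∈ Sf n, (n.factorization p - 1) * p := by
  have h1 : ∀ p ∈ n.primeFactors, 1 ≤ n.factorization p := by
    intro p hp
    exact (Nat.Prime.factorization_pos_of_dvd (Nat.prime_of_mem_primeFactors hp) hn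
      (Nat.dvd_of_mem_primeFactors hp))
  have h2 : ∑ p ∈ Sf n, (n.factorization p - 1) * p
      = ∑ p ∈ n.primeFactors, (n.factorization p - 1) * p := by
    apply Finset.sum_filter_of_ne
    intro p hp hne
    have := h1 p hp
    by_contra hlt
    push_neg at hlt
    have hv1 : n.factorization p = 1 := by omega
    simp [hv1] at hne
  have h3 : ∑ p ∈ n.primeFactors, (n.factorization p - 1) * p + ∑ p ∈ n.primeFactors, p
      = ∑ p ∈ n.primeFactors, n.factorization p * p := by
    rw [← Finset.sum_add_distrib]
    apply Finset.sum_congr rfl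
    intro p hp
    rw [← add_one_mul, Nat.sub_add_cancel (h1 p hp)]
  rw [h2, B_eq, beta]
  omega

lemma Pf_dvd (n : ℕ) (hn : n ≠ 0) : Pf n ∣ n := by
  have h := Nat.factorization_prod_pow_eq_self hn
  have h2 : ∏ p ∈ n.primeFactors, p ^ n.factorization p = n := by
    simpa [Finsupp.prod, Nat.support_factorization] using h
  calc Pf n ∣ ∏ p ∈ n.primeFactors, p ^ n.factorization p :=
        Finset.prod_dvd_prod_of_subset _ _ _ (Finset.filter_subset _ _)
    _ = n := h2

lemma bc_eq (n : ℕ) : bf n ^ 2 * cf n ^ 3 = Pf n := by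
  rw [bf, cf, Pf, ← Finset.prod_pow, ← Finset.prod_pow, Finset.prod_filter,
    ← Finset.prod_mul_distrib]
  apply Finset.prod_congr rfl
  intro p hp
  have h2 : 2 ≤ n.factorization p := (Finset.mem_filter.1 hp).2
  rw [← pow_mul]
  by_cases hpar : n.factorization p % 2 = 1
  · rw [if_pos hpar, if_neg (by omega), ← pow_add]
    congr 1
    omega
  · rw [if_neg hpar, if_pos (by omega), mul_one]
    congr 1
    omega

lemma bf_pos (n : ℕ) : 0 < bf n := by
  unfold bf
  apply Finset.prod_pos
  intro p hp
  exact pow_pos (Nat.prime_of_mem_primeFactors (Finset.mem_filter.1 hp).1).pos _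

lemma cf_pos (n : ℕ) : 0 < cf n := by
  unfold cf
  apply Finset.prod_pos
  intro p hp
  exact (Nat.prime_of_mem_primeFactors (Finset.mem_filter.1 (Finset.mem_filter.1 hp).1).1).pos

lemma sq_two_pow (v : ℕ) : v ^ 2 ≤ 2 ^ (v + 1) := by
  induction v with
  | zero => norm_num
  | succ k ih =>
    have h1 : k < 2 ^ k := (Nat.lt_two_pow_self (n := k))
    have h2 : 2 ^ (k + 1) = 2 * 2 ^ k := by ring
    have h3 : 2 ^ (k + 1 + 1) = 4 * 2 ^ k := by ring
    have h4 : (k + 1) ^ 2 = k ^ 2 + 2 * k + 1 := by ring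
    omega

lemma per_prime {p v : ℕ} (hp : 2 ≤ p) (hv : 2 ≤ v) :
    ((v - 1) * p) ^ 2 ≤ 4 * p ^ v ∧ 4 ≤ p ^ v := by
  have hv2 : v - 2 + 2 = v := by omega
  constructor
  · have h1 : (v - 1) ^ 2 ≤ 2 ^ v := by
      have h := sq_two_pow (v - 1)
      have he : v - 1 + 1 = v := by omega
      rwa [he] at h
    have e1 : (2:ℕ) ^ v = 4 * 2 ^ (v - 2) := by
      conv_lhs => rw [← hv2]
      rw [pow_add]
      ring
    have e2 : p ^ v = p ^ (v - 2) * p ^ 2 := by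
      conv_lhs => rw [← hv2]
      rw [pow_add]
    calc ((v - 1) * p) ^ 2 = (v - 1) ^ 2 * p ^ 2 := by ring
      _ ≤ 2 ^ v * p ^ 2 := Nat.mul_le_mul_right _ h1
      _ = 4 * (2 ^ (v - 2) * p ^ 2) := by rw [e1]; ring
      _ ≤ 4 * (p ^ (v - 2) * p ^ 2) := by
          have := Nat.pow_le_pow_left hp (v - 2)
          exact Nat.mul_le_mul_left _ (Nat.mul_le_mul_right _ this)
      _ = 4 * p ^ v := by rw [← e2]
  · calc (4 : ℕ) = 2 ^ 2 := by norm_num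
      _ ≤ p ^ 2 := Nat.pow_le_pow_left hp 2
      _ ≤ p ^ v := Nat.pow_le_pow_right (by omega) hv

lemma combine (S : Finset ℕ) (s a : ℕ → ℕ)
    (h : ∀ i ∈ S, s i ^ 2 ≤ 4 * a i ∧ 4 ≤ a i) :
    (∑ i ∈ S, s i) ^ 2 ≤ 4 * ∏ i ∈ S, a i := by
  classical
  suffices H : ((∑ i ∈ S, s i) ^ 2 ≤ 4 * ∏ i ∈ S, a i) ∧ (S = ∅ ∨ 4 ≤ ∏ i ∈ S, a i)
    from H.1
  induction S using Finset.induction_on with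
  | empty => simp
  | @insert j T hj ih =>
    have hji := h j (Finset.mem_insert_self j T)
    obtain ⟨ih1, ih2⟩ := ih (fun i hi => h i (Finset.mem_insert_of_mem hi))
    rw [Finset.sum_insert hj, Finset.prod_insert hj]
    rcases ih2 with rfl | h4
    · simp only [Finset.sum_empty, Finset.prod_empty, add_zero, mul_one]
      exact ⟨hji.1, Or.inr hji.2⟩
    · set t := s j
      set T' := ∑ i ∈ T, s i
      set A := ∏ i ∈ T, a i
      refine ⟨?_, Or.inr ?_⟩
      · have h2 : 2 * t * T' ≤ t ^ 2 + T' ^ 2 := two_mul_le_add_sq t T'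
        have he : (t + T') ^ 2 = t ^ 2 + 2 * t * T' + T' ^ 2 := by ring
        have h8a : 8 * a j ≤ 2 * (a j * A) := by
          have : 4 * a j ≤ A * a j := Nat.mul_le_mul_right _ h4
          nlinarith [this]
        have h8A : 8 * A ≤ 2 * (a j * A) := by
          have : 4 * A ≤ a j * A := Nat.mul_le_mul_right _ hji.2
          omega
        omega
      · calc (4:ℕ) ≤ 4 * A := Nat.le_mul_of_pos_right _ (by omega)
          _ ≤ a j * A := Nat.mul_le_mul_right _ hji.2

lemma key_ineq (n : ℕ) (hn : n ≠ 0) : (B n - beta n) ^ 2 ≤ 4 * Pf n := by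
  rw [f_eq n hn, Pf]
  apply combine
  intro p hp
  rw [Sf, Finset.mem_filter] at hp
  exact per_prime (Nat.prime_of_mem_primeFactors hp.1).two_le hp.2

lemma sum_inv_sq (m M : ℕ) (hm : 1 ≤ m) :
    ∑ b ∈ Finset.Icc m M, (1 : ℝ) / (b : ℝ) ^ 2 ≤ 2 / m := by
  have hm0 : (0:ℝ) < m := by exact_mod_cast hm
  rcases lt_or_ge M m with h | h
  · rw [Finset.Icc_eq_empty (by omega)]
    simp
    positivity
  · have key : ∀ K, m ≤ K → ∑ b ∈ Finset.Icc m K, (1:ℝ)/(b:ℝ)^2 ≤ 2/(m:ℝ) - 1/(K:ℝ) := by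
      intro K hK
      induction K, hK using Nat.le_induction with
      | base =>
        rw [Finset.Icc_self, Finset.sum_singleton]
        have h1 : (1:ℝ)/(m:ℝ)^2 ≤ 1/(m:ℝ) := by
          apply div_le_div_of_nonneg_left one_pos.le hm0
          nlinarith [show (1:ℝ) ≤ m from by exact_mod_cast hm]
        have h2 : 2/(m:ℝ) - 1/m = 1/m := by ring
        linarith
      | succ K hK ih =>
        rw [Finset.sum_Icc_succ_top (by omega)]
        have hK0 : (0:ℝ) < K := by
          have : (1:ℝ) ≤ K := by exact_mod_cast le_trans hm hK
          linarith
        have hstep : (1:ℝ)/((K:ℝ)+1)^2 ≤ 1/(K:ℝ) - 1/((K:ℝ)+1) := by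
          have he : (1:ℝ)/(K:ℝ) - 1/((K:ℝ)+1) = 1/((K:ℝ)*((K:ℝ)+1)) := by
            field_simp
            ring
          rw [he]
          apply div_le_div_of_nonneg_left one_pos.le (by positivity)
          nlinarith
        push_cast
        linarith
    calc ∑ b ∈ Finset.Icc m M, (1:ℝ)/(b:ℝ)^2 ≤ 2/(m:ℝ) - 1/(M:ℝ) := key M h
      _ ≤ 2/m := by
          have : (0:ℝ) < M := by
            have : (1:ℝ) ≤ M := by exact_mod_cast le_trans hm h
            linarith
          have : (0:ℝ) ≤ 1/(M:ℝ) := by positivity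
          linarith

lemma sum_inv_sq_ge (M : ℕ) (T : Finset ℕ) (hT : T ⊆ Finset.Icc 1 M) (R : ℝ) (hR : 0 < R)
    (h : ∀ b ∈ T, R ≤ (b : ℝ)) : ∑ b ∈ T, (1:ℝ)/(b:ℝ)^2 ≤ 2 / R := by
  rcases le_or_gt R 1 with hR1 | hR1
  · calc ∑ b ∈ T, (1:ℝ)/(b:ℝ)^2 ≤ ∑ b ∈ Finset.Icc 1 M, (1:ℝ)/(b:ℝ)^2 :=
        Finset.sum_le_sum_of_subset_of_nonneg hT (fun i _ _ => by positivity)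
      _ ≤ 2/(1:ℕ) := sum_inv_sq 1 M le_rfl
      _ ≤ 2/R := by
          rw [Nat.cast_one]
          apply div_le_div_of_nonneg_left (by norm_num) hR hR1
  · set m := ⌈R⌉₊ with hm
    have hm1 : 1 ≤ m := Nat.one_le_ceil_iff.2 hR
    have hsub : T ⊆ Finset.Icc m M := by
      intro b hb
      have hb' := hT hb
      rw [Finset.mem_Icc] at *
      exact ⟨Nat.ceil_le.2 (h b hb), hb'.2⟩
    calc ∑ b ∈ T, (1:ℝ)/(b:ℝ)^2 ≤ ∑ b ∈ Finset.Icc m M, (1:ℝ)/(b:ℝ)^2 :=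
        Finset.sum_le_sum_of_subset_of_nonneg hsub (fun i _ _ => by positivity)
      _ ≤ 2/(m:ℝ) := sum_inv_sq m M hm1
      _ ≤ 2/R := by
          apply div_le_div_of_nonneg_left (by norm_num) hR (Nat.le_ceil R)

lemma sum_inv_c32 (M : ℕ) :
    ∑ c ∈ Finset.Icc 1 M, (1:ℝ)/((c:ℝ) * Real.sqrt c) ≤ 3 := by
  rcases Nat.eq_zero_or_pos M with rfl | hM
  · simp
  have key : ∀ K : ℕ, 1 ≤ K → ∑ c ∈ Finset.Icc 1 K, (1:ℝ)/((c:ℝ) * Real.sqrt c)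
      ≤ 3 - 2 / Real.sqrt (K:ℝ) := by
    intro K hK
    induction K, hK using Nat.le_induction with
    | base => simp [Real.sqrt_one]; norm_num
    | succ K hK ih =>
      rw [Finset.sum_Icc_succ_top (by omega)]
      have hK1 : (1:ℝ) ≤ K := by exact_mod_cast hK
      set s := Real.sqrt (K:ℝ) with hs_def
      have hs0 : 0 < s := Real.sqrt_pos.2 (by linarith)
      have hs2 : s ^ 2 = K := Real.sq_sqrt (by linarith)
      have hcast : ((K + 1 : ℕ) : ℝ) = (K : ℝ) + 1 := by push_cast; ring
      rw [hcast]
      set t := Real.sqrt ((K:ℝ) + 1) with ht_def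
      have ht0 : 0 < t := Real.sqrt_pos.2 (by linarith)
      have ht2 : t ^ 2 = (K:ℝ) + 1 := Real.sq_sqrt (by linarith)
      have hst : s ≤ t := Real.sqrt_le_sqrt (by linarith)
      have hstep : 1 / (((K:ℝ) + 1) * t) ≤ 2 / s - 2 / t := by
        rw [div_sub_div _ _ (ne_of_gt hs0) (ne_of_gt ht0),
          div_le_div_iff₀ (by positivity) (by positivity)]
        have hts : (t - s) * (t + s) = 1 := by nlinarith
        nlinarith [mul_pos hs0 ht0, mul_pos (mul_pos hs0 ht0) ht0,
          mul_le_mul_of_nonneg_right hst (le_of_lt (mul_pos ht0 ht0))]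
      linarith
  calc ∑ c ∈ Finset.Icc 1 M, (1:ℝ)/((c:ℝ) * Real.sqrt c) ≤ 3 - 2 / Real.sqrt (M:ℝ) := key M hM
    _ ≤ 3 := by
        have : 0 < Real.sqrt (M:ℝ) := Real.sqrt_pos.2 (by exact_mod_cast hM)
        have : 0 ≤ 2 / Real.sqrt (M:ℝ) := by positivity
        linarith

set_option maxHeartbeats 1000000 in
/-- `#{n ≤ x : B(n) - β(n) ≥ N} ≪ x / N`, uniformly in `N > 0`. -/
theorem count_B_sub_beta_ge :
    ∃ C : ℝ, 0 < C ∧ ∀ N : ℕ, 1 ≤ N → ∀ x : ℝ, 1 ≤ x →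
      (((Finset.Icc 1 ⌊x⌋₊).filter (fun n => N ≤ B n - beta n)).card : ℝ) ≤
        C * x / (N : ℝ) := by
  classical
  refine ⟨12, by norm_num, ?_⟩
  intro N hN x hx
  set M := ⌊x⌋₊ with hM
  have hMx : (M : ℝ) ≤ x := Nat.floor_le (by linarith)
  have hN0 : (0:ℝ) < N := by exact_mod_cast hN
  set F := (Finset.Icc 1 M).filter (fun n => N ≤ B n - beta n) with hF
  set D := (Finset.Icc 1 M ×ˢ Finset.Icc 1 M).filter
    (fun q : ℕ × ℕ => N ^ 2 ≤ 4 * (q.1 ^ 2 * q.2 ^ 3)) with hD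
  have hmap : ∀ n ∈ F, (bf n, cf n) ∈ D := by
    intro n hn
    rw [hF, Finset.mem_filter, Finset.mem_Icc] at hn
    obtain ⟨⟨hn1, hnM⟩, hfN⟩ := hn
    have hn0 : n ≠ 0 := by omega
    have hPd : Pf n ∣ n := Pf_dvd n hn0
    have hPle : Pf n ≤ M := le_trans (Nat.le_of_dvd (by omega) hPd) hnM
    have hbc : bf n ^ 2 * cf n ^ 3 = Pf n := bc_eq n
    have hb1 : 1 ≤ bf n := bf_pos n
    have hc1 : 1 ≤ cf n := cf_pos n
    have hbM : bf n ≤ M := by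
      have h1 : bf n ≤ bf n ^ 2 := Nat.le_self_pow two_ne_zero _
      have h2 : bf n ^ 2 ≤ bf n ^ 2 * cf n ^ 3 :=
        Nat.le_mul_of_pos_right _ (by positivity)
      omega
    have hcM : cf n ≤ M := by
      have h1 : cf n ≤ cf n ^ 3 := Nat.le_self_pow three_ne_zero _
      have h2 : cf n ^ 3 ≤ bf n ^ 2 * cf n ^ 3 :=
        Nat.le_mul_of_pos_left _ (by positivity)
      omega
    have hkey : N ^ 2 ≤ 4 * (bf n ^ 2 * cf n ^ 3) := by
      rw [hbc]
      calc N ^ 2 ≤ (B n - beta n) ^ 2 := Nat.pow_le_pow_left hfN 2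
        _ ≤ 4 * Pf n := key_ineq n hn0
    rw [hD, Finset.mem_filter, Finset.mem_product, Finset.mem_Icc, Finset.mem_Icc]
    exact ⟨⟨⟨hb1, hbM⟩, ⟨hc1, hcM⟩⟩, hkey⟩
  have hcard : F.card = ∑ q ∈ D, (F.filter (fun n => (bf n, cf n) = q)).card :=
    Finset.card_eq_sum_card_fiberwise hmap
  have hfib : ∀ q ∈ D, ((F.filter (fun n => (bf n, cf n) = q)).card : ℝ)
      ≤ x / ((q.1 : ℝ) ^ 2 * (q.2 : ℝ) ^ 3) := by
    intro q hq
    rw [hD, Finset.mem_filter, Finset.mem_product, Finset.mem_Icc, Finset.mem_Icc] at hq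
    obtain ⟨⟨⟨hq11, _⟩, ⟨hq21, _⟩⟩, _⟩ := hq
    have hd0 : 0 < q.1 ^ 2 * q.2 ^ 3 := by positivity
    have hsub : F.filter (fun n => (bf n, cf n) = q)
        ⊆ (Finset.Ioc 0 M).filter (fun n => (q.1 ^ 2 * q.2 ^ 3) ∣ n) := by
      intro n hn
      rw [Finset.mem_filter] at hn
      obtain ⟨hnF, hq_eq⟩ := hn
      rw [hF, Finset.mem_filter, Finset.mem_Icc] at hnF
      have hn0 : n ≠ 0 := by omega
      rw [Finset.mem_filter, Finset.mem_Ioc]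
      refine ⟨⟨by omega, hnF.1.2⟩, ?_⟩
      have hbc := bc_eq n
      have hq1 : bf n = q.1 := congrArg Prod.fst hq_eq
      have hq2 : cf n = q.2 := congrArg Prod.snd hq_eq
      rw [← hq1, ← hq2, hbc]
      exact Pf_dvd n hn0
    have hcount : ((Finset.Ioc 0 M).filter (fun n => (q.1 ^ 2 * q.2 ^ 3) ∣ n)).card
        = M / (q.1 ^ 2 * q.2 ^ 3) := Nat.Ioc_filter_dvd_card_eq_div M _
    calc ((F.filter (fun n => (bf n, cf n) = q)).card : ℝ)
        ≤ ((M / (q.1 ^ 2 * q.2 ^ 3) : ℕ) : ℝ) := by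
          exact_mod_cast hcount ▸ Finset.card_le_card hsub
      _ ≤ (M : ℝ) / ((q.1 ^ 2 * q.2 ^ 3 : ℕ) : ℝ) := Nat.cast_div_le
      _ ≤ x / ((q.1 : ℝ) ^ 2 * (q.2 : ℝ) ^ 3) := by
          have hq1R : (1:ℝ) ≤ (q.1:ℝ) := by exact_mod_cast hq11
          have hq2R : (1:ℝ) ≤ (q.2:ℝ) := by exact_mod_cast hq21
          rw [show (((q.1^2*q.2^3 : ℕ)):ℝ) = (q.1:ℝ)^2*(q.2:ℝ)^3 by push_cast; ring]
          gcongr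
  have hx0 : (0:ℝ) ≤ x := by linarith
  have h1 : (F.card : ℝ) ≤ ∑ q ∈ D, x / ((q.1:ℝ)^2*(q.2:ℝ)^3) := by
    rw [hcard]
    push_cast
    exact Finset.sum_le_sum hfib
  have h2 : ∑ q ∈ D, x / ((q.1:ℝ)^2*(q.2:ℝ)^3)
      = ∑ c ∈ Finset.Icc 1 M, ∑ b ∈ (Finset.Icc 1 M).filter
          (fun b => N^2 ≤ 4*(b^2*c^3)), x / ((b:ℝ)^2*(c:ℝ)^3) := by
    rw [hD, Finset.sum_filter, Finset.sum_product_right]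
    apply Finset.sum_congr rfl
    intro c _
    rw [Finset.sum_filter]
  have h3 : ∀ c ∈ Finset.Icc 1 M, ∑ b ∈ (Finset.Icc 1 M).filter
      (fun b => N^2 ≤ 4*(b^2*c^3)), x/((b:ℝ)^2*(c:ℝ)^3)
      ≤ (4*x/N) * (1/((c:ℝ)*Real.sqrt (c:ℝ))) := by
    intro c hc
    have hc1 : 1 ≤ c := (Finset.mem_Icc.1 hc).1
    have hcR : (1:ℝ) ≤ (c:ℝ) := by exact_mod_cast hc1
    have hsc : 0 < Real.sqrt (c:ℝ) := Real.sqrt_pos.2 (by linarith)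
    have hss : Real.sqrt (c:ℝ) * Real.sqrt (c:ℝ) = (c:ℝ) := Real.mul_self_sqrt (by linarith)
    set T := (Finset.Icc 1 M).filter (fun b => N^2 ≤ 4*(b^2*c^3)) with hT
    have hrw : ∑ b ∈ T, x/((b:ℝ)^2*(c:ℝ)^3) = (x/(c:ℝ)^3) * ∑ b ∈ T, (1:ℝ)/(b:ℝ)^2 := by
      rw [Finset.mul_sum]
      apply Finset.sum_congr rfl
      intro b hb
      have hb1 : 1 ≤ b := (Finset.mem_Icc.1 (Finset.mem_filter.1 hb).1).1
      have hbR : (0:ℝ) < (b:ℝ) := by exact_mod_cast hb1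
      field_simp
    rw [hrw]
    set R : ℝ := (N:ℝ)/(2*(c:ℝ)*Real.sqrt (c:ℝ)) with hR
    have hR0 : 0 < R := by
      rw [hR]
      positivity
    have hball : ∀ b ∈ T, R ≤ (b:ℝ) := by
      intro b hb
      obtain ⟨hbIcc, hcond⟩ := Finset.mem_filter.1 hb
      have hb1 : 1 ≤ b := (Finset.mem_Icc.1 hbIcc).1
      have hbR : (1:ℝ) ≤ (b:ℝ) := by exact_mod_cast hb1
      have hcondR : (N:ℝ)^2 ≤ 4*((b:ℝ)^2*(c:ℝ)^3) := by exact_mod_cast hcond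
      have hsq : Real.sqrt (c:ℝ)^2 = (c:ℝ) := by rw [sq]; exact hss
      have hYsq : (2*(b:ℝ)*(c:ℝ)*Real.sqrt (c:ℝ))^2 = 4*((b:ℝ)^2*(c:ℝ)^3) := by
        nlinarith [hsq]
      have hY0 : (0:ℝ) ≤ 2*(b:ℝ)*(c:ℝ)*Real.sqrt (c:ℝ) := by positivity
      have hNleY : (N:ℝ) ≤ 2*(b:ℝ)*(c:ℝ)*Real.sqrt (c:ℝ) := by
        apply le_of_pow_le_pow_left₀ two_ne_zero hY0
        rw [hYsq]
        exact hcondR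
      rw [hR, div_le_iff₀ (by positivity)]
      nlinarith [hNleY]
    have hsum := sum_inv_sq_ge M T (Finset.filter_subset _ _) R hR0 hball
    calc (x/(c:ℝ)^3) * ∑ b ∈ T, (1:ℝ)/(b:ℝ)^2 ≤ (x/(c:ℝ)^3) * (2/R) :=
          mul_le_mul_of_nonneg_left hsum (by positivity)
      _ = (4*x/N) * (1/((c:ℝ)*Real.sqrt (c:ℝ))) := by
          have hc0 : (0:ℝ) < (c:ℝ) := by linarith
          rw [hR]
          generalize hsg : Real.sqrt (c:ℝ) = s at hss hsc ⊢
          rw [← hss]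
          have hs0 : s ≠ 0 := ne_of_gt hsc
          have hN' : (N:ℝ) ≠ 0 := ne_of_gt hN0
          field_simp
          ring
  calc (F.card : ℝ) ≤ ∑ q ∈ D, x / ((q.1:ℝ)^2*(q.2:ℝ)^3) := h1
    _ = ∑ c ∈ Finset.Icc 1 M, ∑ b ∈ (Finset.Icc 1 M).filter
          (fun b => N^2 ≤ 4*(b^2*c^3)), x / ((b:ℝ)^2*(c:ℝ)^3) := h2
    _ ≤ ∑ c ∈ Finset.Icc 1 M, (4*x/N) * (1/((c:ℝ)*Real.sqrt (c:ℝ))) :=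
        Finset.sum_le_sum h3
    _ = (4*x/N) * ∑ c ∈ Finset.Icc 1 M, (1:ℝ)/((c:ℝ)*Real.sqrt (c:ℝ)) := by
        rw [Finset.mul_sum]
    _ ≤ (4*x/N) * 3 := mul_le_mul_of_nonneg_left (sum_inv_c32 M) (by positivity)
    _ = 12 * x / N := by ring
end

section
/- For every positive integer a, the map B_a has only finitely many cycles and all positive integers iterate to cycles: the set of periodic points of B_a is finite, and for every integer n ≥ 2 there exist integers k ≥ 0 and l ≥ 1 such that B_a^{k+l}(n) = B_a^k(n); in particular no orbit of B_a is unbounded. -/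
/-- `Ba a n = n + a` if `n` is prime, and `B n` otherwise. -/
def Ba (a n : ℕ) : ℕ := if n.Prime then n + a else B n

lemma B_prime {p : ℕ} (hp : p.Prime) : B p = p := by
  simp [B, Nat.primeFactorsList_prime hp]

lemma B_mul {m n : ℕ} (hm : m ≠ 0) (hn : n ≠ 0) : B (m * n) = B m + B n := by
  unfold B
  rw [(Nat.perm_primeFactorsList_mul hm hn).sum_eq, List.sum_append]

lemma B_le (n : ℕ) : B n ≤ n := by
  induction n using Nat.strong_induction_on with
  | _ n ih =>
    match n with
    | 0 => simp [B]
    | 1 => simp [B]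
    | (k+2) =>
      have h2 : 2 ≤ k + 2 := by omega
      have hfp : (k+2).minFac.Prime := Nat.minFac_prime (by omega)
      have hf := Nat.minFac_dvd (k+2)
      set f := (k+2).minFac with hfdef
      set c := (k+2) / f with hcdef
      have hfc : f * c = k + 2 := Nat.mul_div_cancel' hf
      have hf2 : 2 ≤ f := hfp.two_le
      have hc1 : 1 ≤ c := by
        rcases Nat.eq_zero_or_pos c with h | h
        · rw [h, mul_zero] at hfc; omega
        · exact h
      have hclt : c < k + 2 := Nat.div_lt_self (by omega) (by omega)
      have hBc := ih c hclt
      have hBn : B (k+2) = f + B c := by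
        rw [← hfc, B_mul (by omega) (by omega), B_prime hfp]
      rcases eq_or_lt_of_le hc1 with h1 | h2c
      · have hBc0 : B c = 0 := by rw [← h1]; simp [B]
        rw [← h1, mul_one] at hfc
        omega
      · nlinarith

lemma B_comp {n : ℕ} (h2 : 2 ≤ n) (hnp : ¬ n.Prime) : 2 * B n ≤ n + 4 := by
  have hfp : n.minFac.Prime := Nat.minFac_prime (by omega)
  have hf := Nat.minFac_dvd n
  have hfc2 : n.minFac ≤ n / n.minFac := Nat.minFac_le_div (by omega) hnp
  set f := n.minFac with hfdef
  set c := n / f with hcdef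
  have hfc : f * c = n := Nat.mul_div_cancel' hf
  have hf2 : 2 ≤ f := hfp.two_le
  have hc2 : 2 ≤ c := le_trans hf2 hfc2
  have hBn : B n = f + B c := by
    rw [← hfc, B_mul (by omega) (by omega), B_prime hfp]
  have hBc := B_le c
  zify at *
  nlinarith [mul_nonneg (by omega : (0:ℤ) ≤ (f:ℤ) - 2) (by omega : (0:ℤ) ≤ (c:ℤ) - 2)]

lemma Ba_prime {a p : ℕ} (hp : p.Prime) : Ba a p = p + a := if_pos hp
lemma Ba_not_prime {a p : ℕ} (hp : ¬ p.Prime) : Ba a p = B p := if_neg hp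

lemma exists_hit {a r : ℕ} (hrp : r.Prime) (hra : ¬ r ∣ a) (m : ℕ) :
    ∃ i, 1 ≤ i ∧ i ≤ r ∧ r ∣ m + i * a := by
  haveI : Fact r.Prime := ⟨hrp⟩
  haveI : NeZero r := ⟨by have := hrp.two_le; omega⟩
  have hau : (a : ZMod r) ≠ 0 := by
    rw [Ne, ZMod.natCast_eq_zero_iff]; exact hra
  set x : ZMod r := -(m : ZMod r) * (a : ZMod r)⁻¹ with hx
  have hxa : (m : ZMod r) + x * a = 0 := by
    rw [hx, mul_assoc, inv_mul_cancel₀ hau, mul_one]; ring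
  by_cases h0 : x.val = 0
  · refine ⟨r, by have := hrp.two_le; omega, le_refl r, ?_⟩
    have hx0 : x = 0 := by rwa [← ZMod.val_eq_zero]
    rw [← ZMod.natCast_eq_zero_iff]
    push_cast
    rw [ZMod.natCast_self, zero_mul, add_zero]
    rw [hx0, zero_mul, add_zero] at hxa
    exact hxa
  · refine ⟨x.val, by omega, le_of_lt (ZMod.val_lt x), ?_⟩
    rw [← ZMod.natCast_eq_zero_iff]
    push_cast
    rw [ZMod.natCast_zmod_val]
    exact hxa

lemma Ba_le {a : ℕ} (m : ℕ) : Ba a m ≤ m + a := by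
  by_cases hp : m.Prime
  · rw [Ba_prime hp]
  · rw [Ba_not_prime hp]; have := B_le m; omega

lemma climb {a r : ℕ} (ha : 0 < a) (hrp : r.Prime) (hra : ¬ r ∣ a)
    {p : ℕ} (hp : p.Prime) (hpr : r < p) :
    ∃ t, 1 ≤ t ∧ t ≤ r ∧ ¬ (p + t * a).Prime ∧
      ∀ i ≤ t, (Ba a)^[i] p = p + i * a := by
  obtain ⟨i0, hi01, hi0r, hi0d⟩ := exists_hit hrp hra p
  have hcomp : ¬ (p + i0 * a).Prime := by
    intro hq
    rcases (hq.eq_one_or_self_of_dvd r hi0d) with h | h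
    · have := hrp.two_le; omega
    · have : i0 ≤ i0 * a := Nat.le_mul_of_pos_right i0 ha
      omega
  have hex : ∃ j, ¬ (p + (j + 1) * a).Prime := ⟨i0 - 1, by
    have : i0 - 1 + 1 = i0 := by omega
    rw [this]; exact hcomp⟩
  set t := Nat.find hex + 1 with ht
  have htnp : ¬ (p + t * a).Prime := Nat.find_spec hex
  have htle : t ≤ i0 := by
    have : Nat.find hex ≤ i0 - 1 := Nat.find_min' hex (by
      have : i0 - 1 + 1 = i0 := by omega
      rw [this]; exact hcomp)
    omega
  have hprimes : ∀ i, i < t → (p + i * a).Prime := by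
    intro i hi
    rcases Nat.eq_zero_or_pos i with h | h
    · simpa [h] using hp
    · have hfind : ¬ ¬ (p + (i - 1 + 1) * a).Prime := Nat.find_min hex (by omega)
      have : i - 1 + 1 = i := by omega
      rw [this] at hfind
      exact not_not.mp hfind
  refine ⟨t, by omega, by omega, htnp, ?_⟩
  intro i hi
  induction i with
  | zero => simp
  | succ i ih =>
    rw [Function.iterate_succ_apply', ih (by omega), Ba_prime (hprimes i (by omega))]
    ring

lemma desc {a r : ℕ} (ha : 0 < a) (hrp : r.Prime) (hra : ¬ r ∣ a) (hrle : r ≤ a + 1)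
    {m : ℕ} (hm : 4*r*a + a + r + 5 < m) :
    ∃ k, 1 ≤ k ∧ (Ba a)^[k] m < m := by
  have hr2 := hrp.two_le
  by_cases hp : m.Prime
  · obtain ⟨t, ht1, htr, htnp, hit⟩ := climb ha hrp hra hp (by nlinarith)
    have hta : t * a ≤ r * a := Nat.mul_le_mul_right a htr
    have hq2 : 2 ≤ m + t * a := by omega
    have hBq := B_comp hq2 htnp
    refine ⟨t + 1, by omega, ?_⟩
    rw [Function.iterate_succ_apply', hit t le_rfl, Ba_not_prime htnp]
    nlinarith
  · have hBm := B_comp (by omega : 2 ≤ m) hp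
    refine ⟨1, le_refl 1, ?_⟩
    rw [Function.iterate_one, Ba_not_prime hp]
    omega

lemma low {a r : ℕ} (ha : 0 < a) (hrp : r.Prime) (hra : ¬ r ∣ a) (hrle : r ≤ a + 1)
    (n : ℕ) : ∃ k, (Ba a)^[k] n ≤ 4*r*a + a + r + 5 := by
  induction n using Nat.strong_induction_on with
  | _ n ih =>
    by_cases hn : n ≤ 4*r*a + a + r + 5
    · exact ⟨0, hn⟩
    · obtain ⟨k, hk1, hklt⟩ := desc ha hrp hra hrle (by omega : 4*r*a + a + r + 5 < n)
      obtain ⟨k', hk'⟩ := ih _ hklt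
      exact ⟨k' + k, by rwa [Function.iterate_add_apply]⟩

lemma eventually_periodic {a r : ℕ} (ha : 0 < a) (hrp : r.Prime) (hra : ¬ r ∣ a)
    (hrle : r ≤ a + 1) (n : ℕ) :
    ∃ k l : ℕ, 1 ≤ l ∧ (Ba a)^[k + l] n = (Ba a)^[k] n := by
  set C : ℕ := 4*r*a + a + r + 5 with hC
  have ret : ∀ m : ℕ, ∃ k, 1 ≤ k ∧ (Ba a)^[k] m ≤ C := by
    intro m
    obtain ⟨k, hk⟩ := low ha hrp hra hrle (Ba a m)
    exact ⟨k + 1, by omega, by rwa [Function.iterate_succ_apply]⟩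
  classical
  set R : ℕ → ℕ := fun m => (ret m).choose with hR
  have hRspec : ∀ m, 1 ≤ R m ∧ (Ba a)^[R m] m ≤ C := fun m => (ret m).choose_spec
  obtain ⟨k0, hk0⟩ := low ha hrp hra hrle n
  set s : ℕ → ℕ := fun i => Nat.rec k0 (fun _ prev => prev + R ((Ba a)^[prev] n)) i
    with hs
  have hsucc : ∀ i, s (i + 1) = s i + R ((Ba a)^[s i] n) := fun i => rfl
  have hmono : StrictMono s := by
    apply strictMono_nat_of_lt_succ
    intro i
    have := (hRspec ((Ba a)^[s i] n)).1
    rw [hsucc]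
    omega
  have hinv : ∀ i, (Ba a)^[s i] n ≤ C := by
    intro i
    induction i with
    | zero => exact hk0
    | succ i ih =>
      rw [hsucc, add_comm, Function.iterate_add_apply]
      exact (hRspec ((Ba a)^[s i] n)).2
  set φ : ℕ → Fin (C + 1) := fun i => ⟨(Ba a)^[s i] n, Nat.lt_succ_of_le (hinv i)⟩
    with hφ
  obtain ⟨i, j, hij, hfe⟩ := Finite.exists_ne_map_eq_of_infinite φ
  have hval : (Ba a)^[s i] n = (Ba a)^[s j] n := congrArg Fin.val hfe
  rcases lt_or_gt_of_ne hij with h | h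
  · refine ⟨s i, s j - s i, ?_, ?_⟩
    · have := hmono h; omega
    · have hsij : s i + (s j - s i) = s j := by have := hmono h; omega
      rw [hsij, hval]
  · refine ⟨s j, s i - s j, ?_, ?_⟩
    · have := hmono h; omega
    · have hsij : s j + (s i - s j) = s i := by have := hmono h; omega
      rw [hsij, hval]

lemma iterate_mul_period {f : ℕ → ℕ} {n l : ℕ} (hnl : f^[l] n = n) :
    ∀ q, f^[l * q] n = n := by
  intro q
  induction q with
  | zero => simp
  | succ q ih =>
    have he : l * (q + 1) = l * q + l := by ring
    rw [he, Function.iterate_add_apply, hnl, ih]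

lemma periodic_bound {a r : ℕ} (ha : 0 < a) (hrp : r.Prime) (hra : ¬ r ∣ a)
    (hrle : r ≤ a + 1) {n l : ℕ} (hl : 1 ≤ l) (hnl : (Ba a)^[l] n = n) :
    n ≤ 4*r*a + a + r + 5 := by
  have hr2 := hrp.two_le
  have hper := iterate_mul_period hnl
  have hmod : ∀ j, (Ba a)^[j] n = (Ba a)^[j % l] n := by
    intro j
    conv_lhs => rw [← Nat.mod_add_div j l]
    rw [Function.iterate_add_apply, hper]
  set O := (Finset.range l).image (fun j => (Ba a)^[j] n) with hO
  have hne : O.Nonempty := ⟨n, by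
    simp only [hO, Finset.mem_image]
    exact ⟨0, Finset.mem_range.mpr (by omega), rfl⟩⟩
  set M := O.max' hne with hM
  obtain ⟨j0, hj0l, hj0⟩ : ∃ j0, j0 ∈ Finset.range l ∧ (Ba a)^[j0] n = M := by
    have := O.max'_mem hne
    simpa [hO, Finset.mem_image] using this
  have hub : ∀ j, (Ba a)^[j] n ≤ M := by
    intro j
    rw [hmod j]
    apply Finset.le_max'
    simp only [hO, Finset.mem_image]
    exact ⟨j % l, Finset.mem_range.mpr (Nat.mod_lt _ (by omega)), rfl⟩
  have hnM : n ≤ M := by have := hub 0; simpa using this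
  rcases le_or_gt M (4*r*a + a + r + 5) with hMC | hMC
  · omega
  exfalso
  have hMper : (Ba a)^[l] M = M := by
    rw [← hj0, ← Function.iterate_add_apply, add_comm, Function.iterate_add_apply, hnl]
  have hMub : ∀ j, (Ba a)^[j] M ≤ M := by
    intro j
    have he : (Ba a)^[j] M = (Ba a)^[j + j0] n := by
      rw [← hj0, ← Function.iterate_add_apply]
    rw [he]
    exact hub _
  have hM2 : 2 ≤ M := by omega
  have hMnp : ¬ M.Prime := by
    intro hp
    have h1 := hMub 1
    rw [Function.iterate_one, Ba_prime hp] at h1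
    omega
  set c : ℕ → ℕ := fun s => (Ba a)^[s * (l - 1)] M with hc
  have hc0 : c 0 = M := by simp [hc]
  have hpred : ∀ s, Ba a (c (s + 1)) = c s := by
    intro s
    show Ba a ((Ba a)^[(s + 1) * (l - 1)] M) = (Ba a)^[s * (l - 1)] M
    rw [show Ba a ((Ba a)^[(s + 1) * (l - 1)] M) = (Ba a)^[(s + 1) * (l - 1) + 1] M from
      (Function.iterate_succ_apply' (Ba a) _ M).symm]
    have he : (s + 1) * (l - 1) + 1 = s * (l - 1) + l := by
      cases l with
      | zero => omega
      | succ L => simp only [Nat.succ_sub_one]; ring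
    rw [he, Function.iterate_add_apply, hMper]
  have hcle : ∀ s, c s ≤ M := fun s => hMub _
  have hcl : c l = M := iterate_mul_period hMper (l - 1)
  have hex : ∃ s, ¬ (c (s + 1)).Prime := ⟨l - 1, by
    have he : l - 1 + 1 = l := by omega
    rw [he, hcl]; exact hMnp⟩
  set t := Nat.find hex + 1 with ht
  have htnp : ¬ (c t).Prime := Nat.find_spec hex
  have ht1 : 1 ≤ t := by omega
  have hprimes : ∀ s, 1 ≤ s → s < t → (c s).Prime := by
    intro s h1 h2
    have hmin := Nat.find_min hex (m := s - 1) (by omega)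
    have hs : s - 1 + 1 = s := by omega
    rw [hs] at hmin
    exact not_not.mp hmin
  rcases Nat.lt_or_ge t 2 with ht2 | ht2
  · -- t = 1 : c 1 is composite with Ba (c 1) = M
    have ht1' : t = 1 := by omega
    have hq : ¬ (c 1).Prime := ht1' ▸ htnp
    have hBa : Ba a (c 1) = M := by have := hpred 0; rwa [hc0] at this
    rw [Ba_not_prime hq] at hBa
    have hq2 : 2 ≤ c 1 := by
      rcases Nat.lt_or_ge (c 1) 2 with h | h
      · exfalso
        have h0 : B (c 1) = 0 := by
          rcases (by omega : c 1 = 0 ∨ c 1 = 1) with h' | h' <;> rw [h'] <;> simp [B]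
        omega
      · exact h
    have hcomp := B_comp hq2 hq
    have := hcle 1
    omega
  · -- t ≥ 2
    set p := c (t - 1) with hpdef
    have hpp : p.Prime := hprimes (t - 1) (by omega) (by omega)
    have hp2 := hpp.two_le
    have chain : ∀ i, i ≤ t - 2 → c (t - 1 - i) = p + i * a := by
      intro i
      induction i with
      | zero => intro _; simp [hpdef]
      | succ i ih =>
        intro hi
        have hii := ih (by omega)
        have hprime : (c (t - 1 - i)).Prime := hprimes _ (by omega) (by omega)
        have hs := hpred (t - 1 - (i + 1))
        have hidx : t - 1 - (i + 1) + 1 = t - 1 - i := by omega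
        rw [hidx, hii] at hs
        rw [← hs, Ba_prime (hii ▸ hprime)]
        ring
    have hM_eq : M = p + (t - 1) * a := by
      have h1 : c 1 = p + (t - 2) * a := by
        have hch := chain (t - 2) le_rfl
        have hidx : t - 1 - (t - 2) = 1 := by omega
        rwa [hidx] at hch
      have hp1 : (c 1).Prime := hprimes 1 le_rfl (by omega)
      have hba : Ba a (c 1) = M := by have := hpred 0; rwa [hc0] at this
      rw [h1] at hba hp1
      rw [Ba_prime hp1] at hba
      have he : (t - 1) * a = (t - 2) * a + a := by
        have h' : t - 1 = (t - 2) + 1 := by omega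
        rw [h']; ring
      linarith
    obtain ⟨i0, hi01, hi0r, hi0d⟩ := exists_hit hrp hra p
    have htb : t - 2 < i0 + r := by
      by_contra hcon
      push_neg at hcon
      have hdvd : r ∣ p + (i0 + r) * a := by
        have he : p + (i0 + r) * a = (p + i0 * a) + r * a := by ring
        rw [he]
        exact Nat.dvd_add hi0d (dvd_mul_right r a)
      have hch := chain (i0 + r) hcon
      have hpr : (p + (i0 + r) * a).Prime :=
        hch ▸ hprimes _ (by omega) (by omega)
      rcases hpr.eq_one_or_self_of_dvd r hdvd with h | h
      · omega
      · have hge : i0 + r ≤ (i0 + r) * a := Nat.le_mul_of_pos_right _ ha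
        omega
    have hBa : Ba a (c t) = p := by
      have hs := hpred (t - 1)
      have hidx : t - 1 + 1 = t := by omega
      rwa [hidx] at hs
    rw [Ba_not_prime htnp] at hBa
    have hq2 : 2 ≤ c t := by
      rcases Nat.lt_or_ge (c t) 2 with h | h
      · exfalso
        have h0 : B (c t) = 0 := by
          rcases (by omega : c t = 0 ∨ c t = 1) with h' | h' <;> rw [h'] <;> simp [B]
        omega
      · exact h
    have hcomp := B_comp hq2 htnp
    have hqM := hcle t
    have h2p : 2 * p ≤ M + 4 := by omega
    have hta : (t - 1) * a ≤ 2 * (r * a) := by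
      calc (t - 1) * a ≤ (2 * r) * a := Nat.mul_le_mul_right a (by omega)
        _ = 2 * (r * a) := by ring
    nlinarith

/-- For every `a`, `B_a` has finitely many cycles (the set of periodic points
is finite), and every integer `n ≥ 2` iterates to a cycle. -/
theorem Ba_finitely_many_cycles (a : ℕ) (ha : 0 < a) :
    {n : ℕ | ∃ l : ℕ, 1 ≤ l ∧ (Ba a)^[l] n = n}.Finite ∧
      ∀ n : ℕ, 2 ≤ n → ∃ k l : ℕ, 1 ≤ l ∧ (Ba a)^[k + l] n = (Ba a)^[k] n := by

  set r := (a + 1).minFac with hr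
  have hrp : r.Prime := Nat.minFac_prime (by omega)
  have hrdvd : r ∣ a + 1 := Nat.minFac_dvd _
  have hrle : r ≤ a + 1 := Nat.le_of_dvd (by omega) hrdvd
  have hra : ¬ r ∣ a := by
    intro h
    have h1 : r ∣ 1 := by
      have := Nat.dvd_sub hrdvd h
      simpa using this
    have := hrp.two_le
    have := Nat.le_of_dvd (by omega) h1
    omega
  constructor
  · apply Set.Finite.subset (Set.finite_Iic (4*r*a + a + r + 5))
    rintro n ⟨l, hl, hnl⟩
    exact periodic_bound ha hrp hra hrle hl hnl
  · intro n _
    exact eventually_periodic ha hrp hra hrle n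
end
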